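/- Let H = (V, E) be a hypergraph with uniform hyperedge capacities all equal to k. Suppose one has an algorithm that, on any vertex-induced sub-hypergraph, returns an independent set (a set meeting each hyperedge in at most one vertex) of weight at least 1/α times the maximum weight fractional independent set. Then iterating this algorithm k times — each time removing the returned set and recursing on the remaining vertices, and outputting the union — yields a valid solution (every hyperedge contains at most k output vertices) whose weight is at least 1/(2α) times the weight of the optimal solution with capacities k. -/

import Mathlib

open Finset

/-- Let `H = (V,E)` be a hypergraph with uniform capacities `k ≥ 1`
and nonnegative vertex weights. Suppose `alg` returns, on any induced
sub-hypergraph (given by a vertex subset `S`), an independent set (meeting every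
hyperedge at most once) of weight at least `1/α` times the value of any feasible
fractional independent set supported on `S`. Iterating `k` times, removing the
returned set each time and outputting the union `D k`, yields a set in which every
hyperedge has at most `k` vertices, of weight at least `1/(2α)` times the weight of
any feasible solution of the capacity-`k` problem. -/
theorem stmt_11 {V : Type*} [Fintype V] [DecidableEq V]
    (E : Finset (Finset V)) (w : V → ℝ) (hw : ∀ v, 0 ≤ w v)
    (k : ℕ) (hk : 1 ≤ k) (α : ℝ) (hα : 0 < α)
    (alg : Finset V → Finset V)
    (halg_sub : ∀ S, alg S ⊆ S)
    (halg_ind : ∀ S, ∀ e ∈ E, (e ∩ alg S).card ≤ 1)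
    (halg_apx : ∀ S : Finset V, ∀ x : V → ℝ,
      (∀ v, 0 ≤ x v ∧ x v ≤ 1) → (∀ v, v ∉ S → x v = 0) →
      (∀ e ∈ E, ∑ v ∈ e, x v ≤ 1) →
      ∑ v, w v * x v ≤ α * ∑ v ∈ alg S, w v)
    (D : ℕ → Finset V) (hD0 : D 0 = ∅)
    (hDs : ∀ i, D (i + 1) = D i ∪ alg (Finset.univ \ D i)) :
    (∀ e ∈ E, (e ∩ D k).card ≤ k) ∧
      (∀ X : Finset V, (∀ e ∈ E, (e ∩ X).card ≤ k) →
        ∑ v ∈ X, w v ≤ 2 * α * ∑ v ∈ D k, w v) := by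
  classical
  have hdisj : ∀ i, Disjoint (D i) (alg (univ \ D i)) := by
    intro i
    exact Finset.disjoint_left.mpr fun v hv hv' =>
      (Finset.mem_sdiff.mp (halg_sub _ hv')).2 hv
  have hmono : Monotone D := by
    apply monotone_nat_of_le_succ
    intro n
    rw [hDs n]
    exact subset_union_left
  -- Part 1: capacity bound
  have hcard : ∀ n, ∀ e ∈ E, (e ∩ D n).card ≤ n := by
    intro n
    induction n with
    | zero => intro e he; simp [hD0]
    | succ m ih =>
      intro e he
      rw [hDs m, Finset.inter_union_distrib_left]
      calc (e ∩ D m ∪ e ∩ alg (univ \ D m)).card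
          ≤ (e ∩ D m).card + (e ∩ alg (univ \ D m)).card := Finset.card_union_le _ _
        _ ≤ m + 1 := add_le_add (ih e he) (halg_ind _ e he)
  have hDknn : 0 ≤ ∑ v ∈ D k, w v := Finset.sum_nonneg fun v _ => hw v
  refine ⟨hcard k, ?_⟩
  intro X hX
  -- telescoping weight identity
  have hW : ∀ n, ∑ v ∈ D n, w v = ∑ i ∈ range n, ∑ v ∈ alg (univ \ D i), w v := by
    intro n
    induction n with
    | zero => simp [hD0]
    | succ m ih =>
      rw [hDs m, Finset.sum_union (hdisj m), Finset.sum_range_succ, ih]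
  by_cases hz : ∀ v, w v = 0
  · have h1 : ∑ v ∈ X, w v = 0 := Finset.sum_eq_zero fun v _ => hz v
    have h2 : ∑ v ∈ D k, w v = 0 := Finset.sum_eq_zero fun v _ => hz v
    rw [h1, h2]; norm_num
  push_neg at hz
  obtain ⟨v₀, hv₀⟩ := hz
  have hv₀pos : 0 < w v₀ := lt_of_le_of_ne (hw v₀) (Ne.symm hv₀)
  -- α ≥ 1
  have hWB : w v₀ ≤ α * ∑ v ∈ alg univ, w v := by
    have := halg_apx univ (fun v => if v = v₀ then 1 else 0)
      (fun v => by split <;> norm_num)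
      (fun v hv => absurd (mem_univ v) hv)
      (fun e he => by
        rw [Finset.sum_ite_eq' e v₀ (fun _ => (1:ℝ))]
        split <;> norm_num)
    simpa [mul_ite, Finset.sum_ite_eq' univ v₀] using this
  have hBpos : 0 < ∑ v ∈ alg univ, w v := by
    by_contra h
    push_neg at h
    nlinarith
  have hα1 : 1 ≤ α := by
    have := halg_apx univ (fun v => if v ∈ alg univ then 1 else 0)
      (fun v => by split <;> norm_num)
      (fun v hv => absurd (mem_univ v) hv)
      (fun e he => by
        rw [Finset.sum_ite_mem, Finset.sum_const, nsmul_eq_mul, mul_one]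
        exact_mod_cast halg_ind univ e he)
    rw [show (∑ v, w v * if v ∈ alg univ then 1 else 0) = ∑ v ∈ alg univ, w v by
      simp [mul_ite, Finset.sum_ite_mem]] at this
    nlinarith
  have hkpos : (0:ℝ) < (k:ℝ) := by exact_mod_cast hk
  -- per-step inequality
  have hstep : ∀ i, i ≤ k → (∑ v ∈ X, w v) - (∑ v ∈ D k, w v) ≤
      (k:ℝ) * (α * ∑ v ∈ alg (univ \ D i), w v) := by
    intro i hik
    have happ := halg_apx (univ \ D i) (fun v => if v ∈ X \ D i then 1/(k:ℝ) else 0)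
      (fun v => by
        split
        · constructor
          · positivity
          · rw [div_le_one hkpos]; exact_mod_cast hk
        · norm_num)
      (fun v hv => by
        have : v ∈ D i := by simpa using hv
        simp [this])
      (fun e he => by
        rw [Finset.sum_ite_mem, Finset.sum_const, nsmul_eq_mul]
        have hsub : e ∩ (X \ D i) ⊆ e ∩ X :=
          Finset.inter_subset_inter (Finset.Subset.refl e) (Finset.sdiff_subset)
        have hc : ((e ∩ (X \ D i)).card : ℝ) ≤ (k:ℝ) := by
          exact_mod_cast le_trans (Finset.card_le_card hsub) (hX e he)
        calc ((e ∩ (X \ D i)).card : ℝ) * (1/(k:ℝ)) ≤ (k:ℝ) * (1/(k:ℝ)) := by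
              apply mul_le_mul_of_nonneg_right hc; positivity
          _ = 1 := by field_simp)
    rw [show (∑ v, w v * if v ∈ X \ D i then 1/(k:ℝ) else 0)
        = (∑ v ∈ X \ D i, w v) * (1/(k:ℝ)) by
      simp only [mul_ite, mul_zero]
      rw [Finset.sum_ite_mem, Finset.univ_inter, Finset.sum_mul]] at happ
    have hsplit : ∑ v ∈ X ∩ D i, w v + ∑ v ∈ X \ D i, w v = ∑ v ∈ X, w v :=
      Finset.sum_inter_add_sum_sdiff X (D i) w
    have hXDi : ∑ v ∈ X ∩ D i, w v ≤ ∑ v ∈ D k, w v := by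
      apply Finset.sum_le_sum_of_subset_of_nonneg
      · exact (Finset.inter_subset_right).trans (hmono hik)
      · intro v _ _; exact hw v
    have h1 : (∑ v ∈ X, w v) - (∑ v ∈ D k, w v) ≤ ∑ v ∈ X \ D i, w v := by linarith
    have h2 : (∑ v ∈ X \ D i, w v) * (1/(k:ℝ)) ≤ α * ∑ v ∈ alg (univ \ D i), w v := happ
    have h3 : (∑ v ∈ X \ D i, w v) ≤ (k:ℝ) * (α * ∑ v ∈ alg (univ \ D i), w v) := by
      have h4 := mul_le_mul_of_nonneg_left h2 hkpos.le
      rwa [show (k:ℝ) * ((∑ v ∈ X \ D i, w v) * (1/(k:ℝ))) = ∑ v ∈ X \ D i, w v by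
        field_simp] at h4
    linarith
  -- sum over i < k
  have hsumstep : (k:ℝ) * ((∑ v ∈ X, w v) - (∑ v ∈ D k, w v)) ≤
      (k:ℝ) * (α * ∑ v ∈ D k, w v) := by
    have := Finset.sum_le_sum (fun i (_ : i ∈ range k) => hstep i (Finset.mem_range.mp ‹_›).le)
    rw [Finset.sum_const, Finset.card_range, nsmul_eq_mul, ← Finset.mul_sum,
      ← Finset.mul_sum, ← hW k] at this
    exact this
  have hfinal : (∑ v ∈ X, w v) - (∑ v ∈ D k, w v) ≤ α * ∑ v ∈ D k, w v :=
    le_of_mul_le_mul_left hsumstep hkpos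
  nlinarith
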